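/- arXiv:1612.03588 — 4 statements merged into one kernel-verified Lean document; each statement's English description precedes it below -/
import Mathlib

section
/- With the notation and hypotheses of the theta-branching setup — F(theta,qq,gam,r; t, s) = r - [gam^t (r-s)^{-theta} + (1-gam^t)(r-qq)^{-theta}]^{-1/theta}; sequences (theta_n, gamma_n, q_n, r_n) -> (theta, gamma, q, 1) in (0,1] x (0,1) x [0,1) x {r > 1}; m_n = gamma_n^{-1/theta_n}; t_n -> infinity with (r_n - 1)*m_n^{t_n} -> x in (0,infinity) — let k >= 0 be a fixed integer and lambda >= 0. Write F_n(t,s) = F(theta_n,q_n,gamma_n,r_n; t, s). Then the ratio (F_n(t_n - k, exp(-lambda*m_n^{k - t_n}) * F_n(k,1)) - F_n(t_n - k, exp(-lambda*m_n^{k - t_n}) * F_n(k,0))) / (F_n(t_n,1) - F_n(t_n,0)) converges, as n -> infinity, to Psi(x + lambda)/Psi(x), where Psi(lambda) = 1 - [1 + (1-q)^theta * lambda^{-theta}]^{-1/theta}. Probabilistically, E(exp(-lambda*m_n^{k - t_n}*Z_n(t_n - k)) | T_n > t_n) -> Psi(x+lambda)/Psi(x). -/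
open Filter

/-- The `t`-th iterate of the defective theta-branching reproduction law with
parameters `(θ, qq, gam, r) ∈ (0,1] × [0,1) × (0,1) × (1,∞)`:
`F θ qq gam r t s = r - [gam^t (r-s)^{-θ} + (1-gam^t)(r-qq)^{-θ}]^{-1/θ}`. -/
noncomputable def thetaIter (θ qq gam r : ℝ) (t : ℕ) (s : ℝ) : ℝ :=
  r - (gam ^ t * (r - s) ^ (-θ) + (1 - gam ^ t) * (r - qq) ^ (-θ)) ^ (-θ⁻¹)

/-- The limit Laplace transform `Ψ(λ) = 1 - [1 + (1-q)^θ λ^{-θ}]^{-1/θ}`. -/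
noncomputable def thetaPsi (θ q lam : ℝ) : ℝ :=
  1 - (1 + (1 - q) ^ θ * lam ^ (-θ)) ^ (-θ⁻¹)

lemma thetaAux1 (θ q y : ℝ) (hθ : 0 < θ) (hq : q < 1) (hy : 0 < y) :
    ((1 - q) ^ (-θ)) ^ (-θ⁻¹) - (y ^ (-θ) + (1 - q) ^ (-θ)) ^ (-θ⁻¹)
      = (1 - q) * thetaPsi θ q y := by
  have h1q : (0:ℝ) < 1 - q := by linarith
  have hcol : ((1 - q) ^ (-θ)) ^ (-θ⁻¹) = 1 - q := by
    rw [← Real.rpow_mul h1q.le, show (-θ) * (-θ⁻¹) = 1 by field_simp, Real.rpow_one]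
  have hinv : (1 - q) ^ (-θ) * (1 - q) ^ θ = 1 := by
    rw [← Real.rpow_add h1q]; simp
  have e2 : y ^ (-θ) + (1 - q) ^ (-θ) = (1 - q) ^ (-θ) * (1 + (1 - q) ^ θ * y ^ (-θ)) := by
    rw [mul_add, mul_one, ← mul_assoc, hinv, one_mul, add_comm]
  rw [thetaPsi, e2, Real.mul_rpow (by positivity) (by positivity), hcol]
  ring

lemma thetaAux2 (θ q y : ℝ) (hθ : 0 < θ) (hq : q < 1) (hy : 0 < y) : 0 < thetaPsi θ q y := by
  have h1q : (0:ℝ) < 1 - q := by linarith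
  have hb : (1:ℝ) < 1 + (1 - q) ^ θ * y ^ (-θ) := by
    nlinarith [Real.rpow_pos_of_pos h1q θ, Real.rpow_pos_of_pos hy (-θ)]
  have := Real.rpow_lt_one_of_one_lt_of_neg hb (by linarith [inv_pos.mpr hθ] : -θ⁻¹ < 0)
  unfold thetaPsi; linarith

/-- Proposition 2(b): under the hypotheses of Proposition 2(a), for a fixed `k ≥ 0`
and `λ ≥ 0`, the conditional Laplace transform
`E(exp(-λ m_n^{k-t_n} Z_n(t_n - k)) | T_n > t_n)`, expressed through the explicit
iterates, converges to `Ψ(x+λ)/Ψ(x)`. -/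
theorem stmt_15
    (θ q γ : ℝ) (hθ : θ ∈ Set.Ioc (0 : ℝ) 1) (hq : q ∈ Set.Ico (0 : ℝ) 1)
    (hγ : γ ∈ Set.Ioo (0 : ℝ) 1)
    (θn γn qn rn : ℕ → ℝ)
    (hθn : ∀ n, θn n ∈ Set.Ioc (0 : ℝ) 1)
    (hγn : ∀ n, γn n ∈ Set.Ioo (0 : ℝ) 1)
    (hqn : ∀ n, qn n ∈ Set.Ico (0 : ℝ) 1)
    (hrn : ∀ n, 1 < rn n)
    (hθlim : Tendsto θn atTop (nhds θ)) (hγlim : Tendsto γn atTop (nhds γ))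
    (hqlim : Tendsto qn atTop (nhds q)) (hrlim : Tendsto rn atTop (nhds 1))
    (m : ℕ → ℝ) (hm : ∀ n, m n = γn n ^ (-(θn n)⁻¹))
    (t : ℕ → ℕ) (ht : Tendsto t atTop atTop)
    (x : ℝ) (hx : 0 < x)
    (hxlim : Tendsto (fun n => (rn n - 1) * m n ^ t n) atTop (nhds x))
    (k : ℕ) (lam : ℝ) (hlam : 0 ≤ lam) :
    Tendsto
      (fun n =>
        (thetaIter (θn n) (qn n) (γn n) (rn n) (t n - k)
            (Real.exp (-(lam * m n ^ ((k : ℝ) - (t n : ℝ)))) *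
              thetaIter (θn n) (qn n) (γn n) (rn n) k 1) -
          thetaIter (θn n) (qn n) (γn n) (rn n) (t n - k)
            (Real.exp (-(lam * m n ^ ((k : ℝ) - (t n : ℝ)))) *
              thetaIter (θn n) (qn n) (γn n) (rn n) k 0)) /
        (thetaIter (θn n) (qn n) (γn n) (rn n) (t n) 1 -
          thetaIter (θn n) (qn n) (γn n) (rn n) (t n) 0))
      atTop (nhds (thetaPsi θ q (x + lam) / thetaPsi θ q x)) := by
  obtain ⟨hθ0, hθ1⟩ := hθ
  obtain ⟨hq0, hq1⟩ := hq
  obtain ⟨hγ0, hγ1⟩ := hγ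
  have hθn0 : ∀ n, 0 < θn n := fun n => (hθn n).1
  have hγn0 : ∀ n, 0 < γn n := fun n => (hγn n).1
  have hγn1 : ∀ n, γn n < 1 := fun n => (hγn n).2
  have hqn0 : ∀ n, 0 ≤ qn n := fun n => (hqn n).1
  have hqn1 : ∀ n, qn n < 1 := fun n => (hqn n).2
  have h1q : (0:ℝ) < 1 - q := by linarith
  have hmpos : ∀ n, 0 < m n := fun n => by
    rw [hm n]; exact Real.rpow_pos_of_pos (hγn0 n) _
  set v : ℕ → ℝ := fun n => m n ^ ((k : ℝ) - (t n : ℝ)) with hv_def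
  have hvpos : ∀ n, 0 < v n := fun n => Real.rpow_pos_of_pos (hmpos n) _
  -- basic rpow identities
  have hms : ∀ n (s : ℕ), m n ^ s = γn n ^ (-(θn n)⁻¹ * (s:ℝ)) := by
    intro n s
    rw [hm n, ← Real.rpow_natCast (γn n ^ (-(θn n)⁻¹)) s, ← Real.rpow_mul (hγn0 n).le]
  have hmγ : ∀ n (s : ℕ), (m n ^ s) ^ (-(θn n)) = γn n ^ s := by
    intro n s
    rw [hms, ← Real.rpow_mul (hγn0 n).le,
      show -(θn n)⁻¹ * (s:ℝ) * -(θn n) = (s:ℝ) by have h := (hθn0 n).ne'; field_simp, Real.rpow_natCast]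
  have hmγ' : ∀ n (s : ℕ), m n ^ s = (γn n ^ s) ^ (-(θn n)⁻¹) := by
    intro n s
    rw [← Real.rpow_natCast (γn n) s, ← Real.rpow_mul (hγn0 n).le, hms, mul_comm]
  have hkey : ∀ n (s : ℕ) (y : ℝ), 0 ≤ y →
      γn n ^ s * y ^ (-(θn n)) = (y * m n ^ s) ^ (-(θn n)) := by
    intro n s y hy
    rw [Real.mul_rpow hy (pow_nonneg (hmpos n).le s), hmγ n s]; ring
  -- γ-power limits
  have hγpow : ∀ s : ℕ → ℕ, Tendsto s atTop atTop →
      Tendsto (fun n => γn n ^ s n) atTop (nhds 0) := by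
    intro s hs
    have hc : γ < (1 + γ)/2 := by linarith
    have hev : ∀ᶠ n in atTop, γn n ≤ (1+γ)/2 := hγlim.eventually (eventually_le_nhds hc)
    have hup : Tendsto (fun n => ((1+γ)/2) ^ s n) atTop (nhds 0) :=
      (tendsto_pow_atTop_nhds_zero_of_lt_one (by linarith) (by linarith)).comp hs
    refine tendsto_of_tendsto_of_tendsto_of_le_of_le' tendsto_const_nhds hup ?_ ?_
    · exact Eventually.of_forall fun n => pow_nonneg (hγn0 n).le _
    · filter_upwards [hev] with n hn
      exact pow_le_pow_left₀ (hγn0 n).le hn _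
  have hγT : Tendsto (fun n => γn n ^ t n) atTop (nhds 0) := hγpow t ht
  have hγTk : Tendsto (fun n => γn n ^ (t n - k)) atTop (nhds 0) :=
    hγpow _ ((tendsto_sub_atTop_nat k).comp ht)
  have hγk : Tendsto (fun n => γn n ^ k) atTop (nhds (γ ^ k)) := hγlim.pow k
  have hRQ : Tendsto (fun n => (rn n - qn n) ^ (-(θn n))) atTop (nhds ((1-q) ^ (-θ))) :=
    (hrlim.sub hqlim).rpow hθlim.neg (Or.inl (by simpa using h1q.ne'))
  have hR0 : Tendsto (fun n => (rn n) ^ (-(θn n))) atTop (nhds 1) := by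
    simpa using hrlim.rpow hθlim.neg (Or.inl one_ne_zero)
  have hB1 : Tendsto (fun n => γn n ^ t n * (rn n - 1) ^ (-(θn n))) atTop (nhds (x ^ (-θ))) := by
    have h := hxlim.rpow hθlim.neg (Or.inl hx.ne')
    exact h.congr fun n => (hkey n (t n) _ (by linarith [hrn n])).symm
  -- denominator inner limits
  have hI1 : Tendsto (fun n => γn n ^ t n * (rn n - 1) ^ (-(θn n))
      + (1 - γn n ^ t n) * (rn n - qn n) ^ (-(θn n))) atTop
      (nhds (x ^ (-θ) + (1-q) ^ (-θ))) := by
    simpa using hB1.add (((tendsto_const_nhds : Tendsto (fun _ : ℕ => (1:ℝ)) atTop (nhds 1)).sub hγT).mul hRQ)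
  have hI0 : Tendsto (fun n => γn n ^ t n * (rn n - 0) ^ (-(θn n))
      + (1 - γn n ^ t n) * (rn n - qn n) ^ (-(θn n))) atTop
      (nhds ((1-q) ^ (-θ))) := by
    simpa using (hγT.mul hR0).add (((tendsto_const_nhds : Tendsto (fun _ : ℕ => (1:ℝ)) atTop (nhds 1)).sub hγT).mul hRQ)
  have hnegθinv : Tendsto (fun n => -(θn n)⁻¹) atTop (nhds (-θ⁻¹)) :=
    (hθlim.inv₀ hθ0.ne').neg
  have hI0pos : (0:ℝ) < (1-q) ^ (-θ) := Real.rpow_pos_of_pos h1q _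
  have hI1pos : (0:ℝ) < x ^ (-θ) + (1-q) ^ (-θ) := by
    have := Real.rpow_pos_of_pos hx (-θ); linarith
  have hD : Tendsto (fun n => thetaIter (θn n) (qn n) (γn n) (rn n) (t n) 1 -
      thetaIter (θn n) (qn n) (γn n) (rn n) (t n) 0) atTop
      (nhds (((1-q) ^ (-θ)) ^ (-θ⁻¹) - (x ^ (-θ) + (1-q) ^ (-θ)) ^ (-θ⁻¹))) := by
    have h0 := hI0.rpow hnegθinv (Or.inl hI0pos.ne')
    have h1 := hI1.rpow hnegθinv (Or.inl hI1pos.ne')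
    exact (h0.sub h1).congr fun n => by simp only [thetaIter]; ring
  -- v → 0
  have hmlim : Tendsto m atTop (nhds (γ ^ (-θ⁻¹))) := by
    have := hγlim.rpow hnegθinv (Or.inl hγ0.ne')
    exact this.congr fun n => (hm n).symm
  have hmT : Tendsto (fun n => m n ^ t n) atTop atTop := by
    have hr0 : Tendsto (fun n => rn n - 1) atTop (nhdsWithin 0 (Set.Ioi 0)) := by
      refine tendsto_nhdsWithin_of_tendsto_nhds_of_eventually_within _ ?_
        (Eventually.of_forall fun n => sub_pos.mpr (hrn n))
      simpa using hrlim.sub (tendsto_const_nhds : Tendsto (fun _ : ℕ => (1:ℝ)) atTop (nhds 1))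
    have hinv : Tendsto (fun n => (rn n - 1)⁻¹) atTop atTop := hr0.inv_tendsto_nhdsGT_zero
    have := Tendsto.pos_mul_atTop hx hxlim hinv
    exact this.congr fun n => by
      field_simp [sub_ne_zero.mpr (hrn n).ne']
  have hvlim : Tendsto v atTop (nhds 0) := by
    have h1 : Tendsto (fun n => m n ^ k * (m n ^ t n)⁻¹) atTop (nhds 0) := by
      simpa using (hmlim.pow k).mul hmT.inv_tendsto_atTop
    refine h1.congr fun n => ?_
    rw [hv_def]
    simp only
    rw [Real.rpow_sub (hmpos n), Real.rpow_natCast, Real.rpow_natCast, div_eq_mul_inv]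
  -- slope limit
  have hslope : Tendsto (fun n => (1 - Real.exp (-(lam * v n))) / v n) atTop (nhds lam) := by
    have hderiv : HasDerivAt (fun y : ℝ => 1 - Real.exp (-(lam * y))) lam 0 := by
      have h1 : HasDerivAt (fun y : ℝ => -(lam * y)) (-lam) 0 := by
        simpa [Pi.neg_def] using ((hasDerivAt_id (0:ℝ)).const_mul lam).neg
      have h2 := h1.exp
      have h3 := (hasDerivAt_const (0:ℝ) (1:ℝ)).sub h2
      simpa [Pi.sub_def] using h3
    have hs := hasDerivAt_iff_tendsto_slope.mp hderiv
    have hvne : Tendsto v atTop (nhdsWithin 0 {(0:ℝ)}ᶜ) :=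
      tendsto_nhdsWithin_of_tendsto_nhds_of_eventually_within _ hvlim
        (Eventually.of_forall fun n => (hvpos n).ne')
    refine (hs.comp hvne).congr fun n => ?_
    simp [slope_def_field, Function.comp]
  have hexp1 : Tendsto (fun n => Real.exp (-(lam * v n))) atTop (nhds 1) := by
    have : Tendsto (fun n => -(lam * v n)) atTop (nhds 0) := by
      simpa using ((hvlim.const_mul lam).neg)
    simpa [Function.comp_def] using (Real.continuous_exp.tendsto 0).comp this
  -- positivity facts
  have hγkle : ∀ n, γn n ^ k ≤ 1 := fun n => pow_le_one₀ (hγn0 n).le (hγn1 n).le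
  have hIkpos : ∀ n (s : ℝ), s < rn n → 0 < γn n ^ k * (rn n - s) ^ (-(θn n))
      + (1 - γn n ^ k) * (rn n - qn n) ^ (-(θn n)) := by
    intro n s hsr
    refine add_pos_of_pos_of_nonneg
      (mul_pos (pow_pos (hγn0 n) k) (Real.rpow_pos_of_pos (by linarith) _))
      (mul_nonneg (by linarith [hγkle n])
        (Real.rpow_pos_of_pos (by linarith [hrn n, hqn1 n]) _).le)
  have hexple1 : ∀ n, Real.exp (-(lam * v n)) ≤ 1 := by
    intro n
    rw [Real.exp_le_one_iff]
    nlinarith [hvpos n]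
  have hrs : ∀ n (s : ℝ), s < rn n →
      0 < rn n - Real.exp (-(lam * v n)) * thetaIter (θn n) (qn n) (γn n) (rn n) k s := by
    intro n s hsr
    have hI := hIkpos n s hsr
    have hW := Real.rpow_pos_of_pos hI (-(θn n)⁻¹)
    have he0 := Real.exp_pos (-(lam * v n))
    have heq : rn n - Real.exp (-(lam * v n)) * thetaIter (θn n) (qn n) (γn n) (rn n) k s
        = rn n * (1 - Real.exp (-(lam * v n)))
          + Real.exp (-(lam * v n)) * (γn n ^ k * (rn n - s) ^ (-(θn n))
            + (1 - γn n ^ k) * (rn n - qn n) ^ (-(θn n))) ^ (-(θn n)⁻¹) := by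
      simp only [thetaIter]; ring
    rw [heq]
    have hr0 : 0 < rn n := by linarith [hrn n]
    nlinarith [mul_pos he0 hW, hexple1 n]
  -- m^(T-k) = v⁻¹ eventually
  have hminv : ∀ n, k ≤ t n → m n ^ (t n - k) = (v n)⁻¹ := by
    intro n hkT
    rw [hv_def]
    simp only
    rw [← Real.rpow_neg (hmpos n).le, neg_sub, ← Nat.cast_sub hkT, Real.rpow_natCast]
  -- γ^(T-k) * Ik1 → x^{-θ}
  have hxk : Tendsto (fun n => γn n ^ (t n - k) * (γn n ^ k * (rn n - 1) ^ (-(θn n))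
      + (1 - γn n ^ k) * (rn n - qn n) ^ (-(θn n)))) atTop (nhds (x ^ (-θ))) := by
    have h2 : Tendsto (fun n => γn n ^ t n * (rn n - 1) ^ (-(θn n))
        + γn n ^ (t n - k) * ((1 - γn n ^ k) * (rn n - qn n) ^ (-(θn n)))) atTop
        (nhds (x ^ (-θ))) := by
      simpa using hB1.add (hγTk.mul
        (((tendsto_const_nhds : Tendsto (fun _ : ℕ => (1:ℝ)) atTop (nhds 1)).sub hγk).mul hRQ))
    refine h2.congr' ?_
    filter_upwards [ht.eventually_ge_atTop k] with n hkT
    have hpw : γn n ^ (t n - k) * γn n ^ k = γn n ^ t n := by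
      rw [← pow_add, Nat.sub_add_cancel hkT]
    rw [← hpw]; ring
  -- m^(T-k) * W1 → x
  have hmw1 : Tendsto (fun n => m n ^ (t n - k) * (γn n ^ k * (rn n - 1) ^ (-(θn n))
      + (1 - γn n ^ k) * (rn n - qn n) ^ (-(θn n))) ^ (-(θn n)⁻¹)) atTop (nhds x) := by
    have h := hxk.rpow hnegθinv (Or.inl (Real.rpow_pos_of_pos hx (-θ)).ne')
    have hval : (x ^ (-θ)) ^ (-θ⁻¹) = x := by
      rw [← Real.rpow_mul hx.le, show (-θ) * (-θ⁻¹) = 1 by field_simp, Real.rpow_one]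
    rw [hval] at h
    refine h.congr fun n => ?_
    rw [Real.mul_rpow (pow_nonneg (hγn0 n).le _) (hIkpos n 1 (hrn n)).le,
      ← hmγ' n (t n - k)]
  -- m^(T-k) * (rn - e * iter k 1) → lam + x
  have hG : Tendsto (fun n => m n ^ (t n - k) * (rn n - Real.exp (-(lam * v n)) *
      thetaIter (θn n) (qn n) (γn n) (rn n) k 1)) atTop (nhds (lam + x)) := by
    have h2 : Tendsto (fun n => rn n * ((1 - Real.exp (-(lam * v n))) / v n)
        + Real.exp (-(lam * v n)) * (m n ^ (t n - k) * (γn n ^ k * (rn n - 1) ^ (-(θn n))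
          + (1 - γn n ^ k) * (rn n - qn n) ^ (-(θn n))) ^ (-(θn n)⁻¹))) atTop
        (nhds (lam + x)) := by
      simpa using (hrlim.mul hslope).add (hexp1.mul hmw1)
    refine h2.congr' ?_
    filter_upwards [ht.eventually_ge_atTop k] with n hkT
    have hv0 := (hvpos n).ne'
    simp only [thetaIter]
    rw [hminv n hkT]
    field_simp
    ring
  have hlamx : (0:ℝ) < lam + x := by linarith
  have hJ1f : Tendsto (fun n => γn n ^ (t n - k) * (rn n - Real.exp (-(lam * v n)) *
      thetaIter (θn n) (qn n) (γn n) (rn n) k 1) ^ (-(θn n))) atTop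
      (nhds ((lam + x) ^ (-θ))) := by
    have h := hG.rpow hθlim.neg (Or.inl hlamx.ne')
    refine h.congr fun n => ?_
    rw [mul_comm (m n ^ (t n - k)) _, ← hkey n (t n - k) _ (hrs n 1 (hrn n)).le]
  have hJ1 : Tendsto (fun n => γn n ^ (t n - k) * (rn n - Real.exp (-(lam * v n)) *
      thetaIter (θn n) (qn n) (γn n) (rn n) k 1) ^ (-(θn n))
      + (1 - γn n ^ (t n - k)) * (rn n - qn n) ^ (-(θn n))) atTop
      (nhds ((lam + x) ^ (-θ) + (1-q) ^ (-θ))) := by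
    simpa using hJ1f.add
      (((tendsto_const_nhds : Tendsto (fun _ : ℕ => (1:ℝ)) atTop (nhds 1)).sub hγTk).mul hRQ)
  -- squeeze for the s = 0 term
  have hL : Tendsto (fun n => Real.exp (lam * v n * θn n) * (γn n ^ (t n - k) *
      (γn n ^ k * (rn n - 0) ^ (-(θn n)) + (1 - γn n ^ k) * (rn n - qn n) ^ (-(θn n)))))
      atTop (nhds 0) := by
    have hR0' : Tendsto (fun n => (rn n - 0) ^ (-(θn n))) atTop (nhds 1) := by
      simpa using hR0
    have hIk0lim := (hγk.mul hR0').add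
      (((tendsto_const_nhds : Tendsto (fun _ : ℕ => (1:ℝ)) atTop (nhds 1)).sub hγk).mul hRQ)
    have hexpθ : Tendsto (fun n => Real.exp (lam * v n * θn n)) atTop (nhds 1) := by
      have h0 : Tendsto (fun n => lam * v n * θn n) atTop (nhds 0) := by
        simpa using ((hvlim.const_mul lam).mul hθlim)
      simpa [Function.comp_def] using (Real.continuous_exp.tendsto 0).comp h0
    simpa using hexpθ.mul (hγTk.mul hIk0lim)
  have hJ0f : Tendsto (fun n => γn n ^ (t n - k) * (rn n - Real.exp (-(lam * v n)) *
      thetaIter (θn n) (qn n) (γn n) (rn n) k 0) ^ (-(θn n))) atTop (nhds 0) := by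
    have hr0big : ∀ n, (0:ℝ) < rn n := fun n => by linarith [hrn n]
    refine tendsto_of_tendsto_of_tendsto_of_le_of_le' tendsto_const_nhds hL ?_ ?_
    · exact Eventually.of_forall fun n => mul_nonneg (pow_nonneg (hγn0 n).le _)
        (Real.rpow_nonneg (hrs n 0 (hr0big n)).le _)
    · refine Eventually.of_forall fun n => ?_
      have hI := hIkpos n 0 (hr0big n)
      have hW := Real.rpow_pos_of_pos hI (-(θn n)⁻¹)
      have he0 := Real.exp_pos (-(lam * v n))
      have hlow : Real.exp (-(lam * v n)) * (γn n ^ k * (rn n - 0) ^ (-(θn n))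
            + (1 - γn n ^ k) * (rn n - qn n) ^ (-(θn n))) ^ (-(θn n)⁻¹)
          ≤ rn n - Real.exp (-(lam * v n)) * thetaIter (θn n) (qn n) (γn n) (rn n) k 0 := by
        have heq : rn n - Real.exp (-(lam * v n)) * thetaIter (θn n) (qn n) (γn n) (rn n) k 0
            = rn n * (1 - Real.exp (-(lam * v n)))
              + Real.exp (-(lam * v n)) * (γn n ^ k * (rn n - 0) ^ (-(θn n))
                + (1 - γn n ^ k) * (rn n - qn n) ^ (-(θn n))) ^ (-(θn n)⁻¹) := by
          simp only [thetaIter]; ring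
        rw [heq]
        nlinarith [hexple1 n, hr0big n]
      have h1 : (rn n - Real.exp (-(lam * v n)) *
            thetaIter (θn n) (qn n) (γn n) (rn n) k 0) ^ (-(θn n))
          ≤ (Real.exp (-(lam * v n)) * (γn n ^ k * (rn n - 0) ^ (-(θn n))
            + (1 - γn n ^ k) * (rn n - qn n) ^ (-(θn n))) ^ (-(θn n)⁻¹)) ^ (-(θn n)) :=
        Real.rpow_le_rpow_of_nonpos (by positivity) hlow (by linarith [hθn0 n])
      have h2 : (Real.exp (-(lam * v n)) * (γn n ^ k * (rn n - 0) ^ (-(θn n))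
            + (1 - γn n ^ k) * (rn n - qn n) ^ (-(θn n))) ^ (-(θn n)⁻¹)) ^ (-(θn n))
          = Real.exp (lam * v n * θn n) * (γn n ^ k * (rn n - 0) ^ (-(θn n))
            + (1 - γn n ^ k) * (rn n - qn n) ^ (-(θn n))) := by
        rw [Real.mul_rpow he0.le hW.le]
        congr 1
        · rw [Real.rpow_def_of_pos he0, Real.log_exp]
          congr 1; ring
        · rw [← Real.rpow_mul hI.le,
            show -(θn n)⁻¹ * -(θn n) = 1 by
              have h := (hθn0 n).ne'; field_simp, Real.rpow_one]
      calc γn n ^ (t n - k) * (rn n - Real.exp (-(lam * v n)) *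
            thetaIter (θn n) (qn n) (γn n) (rn n) k 0) ^ (-(θn n))
          ≤ γn n ^ (t n - k) * (Real.exp (lam * v n * θn n) * (γn n ^ k * (rn n - 0) ^ (-(θn n))
            + (1 - γn n ^ k) * (rn n - qn n) ^ (-(θn n)))) := by
            rw [← h2]
            exact mul_le_mul_of_nonneg_left h1 (pow_nonneg (hγn0 n).le _)
        _ = Real.exp (lam * v n * θn n) * (γn n ^ (t n - k) * (γn n ^ k * (rn n - 0) ^ (-(θn n))
            + (1 - γn n ^ k) * (rn n - qn n) ^ (-(θn n)))) := by ring
  have hJ0 : Tendsto (fun n => γn n ^ (t n - k) * (rn n - Real.exp (-(lam * v n)) *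
      thetaIter (θn n) (qn n) (γn n) (rn n) k 0) ^ (-(θn n))
      + (1 - γn n ^ (t n - k)) * (rn n - qn n) ^ (-(θn n))) atTop
      (nhds ((1-q) ^ (-θ))) := by
    simpa using hJ0f.add
      (((tendsto_const_nhds : Tendsto (fun _ : ℕ => (1:ℝ)) atTop (nhds 1)).sub hγTk).mul hRQ)
  -- numerator limit
  have hJ1pos : (0:ℝ) < (lam + x) ^ (-θ) + (1-q) ^ (-θ) := by
    have := Real.rpow_pos_of_pos hlamx (-θ); linarith
  have hN : Tendsto (fun n =>
      thetaIter (θn n) (qn n) (γn n) (rn n) (t n - k)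
        (Real.exp (-(lam * v n)) * thetaIter (θn n) (qn n) (γn n) (rn n) k 1) -
      thetaIter (θn n) (qn n) (γn n) (rn n) (t n - k)
        (Real.exp (-(lam * v n)) * thetaIter (θn n) (qn n) (γn n) (rn n) k 0)) atTop
      (nhds (((1-q) ^ (-θ)) ^ (-θ⁻¹) - ((lam + x) ^ (-θ) + (1-q) ^ (-θ)) ^ (-θ⁻¹))) := by
    have h0 := hJ0.rpow hnegθinv (Or.inl hI0pos.ne')
    have h1 := hJ1.rpow hnegθinv (Or.inl hJ1pos.ne')
    exact (h0.sub h1).congr fun n => by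
      simp only [thetaIter]; ring
  -- final assembly
  have hDval : ((1-q) ^ (-θ)) ^ (-θ⁻¹) - (x ^ (-θ) + (1-q) ^ (-θ)) ^ (-θ⁻¹)
      = (1 - q) * thetaPsi θ q x := thetaAux1 θ q x hθ0 hq1 hx
  have hNval : ((1-q) ^ (-θ)) ^ (-θ⁻¹) - ((lam + x) ^ (-θ) + (1-q) ^ (-θ)) ^ (-θ⁻¹)
      = (1 - q) * thetaPsi θ q (x + lam) := by
    rw [add_comm lam x]
    exact thetaAux1 θ q (x + lam) hθ0 hq1 (by linarith)
  have hψx := thetaAux2 θ q x hθ0 hq1 hx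
  have hDne : ((1-q) ^ (-θ)) ^ (-θ⁻¹) - (x ^ (-θ) + (1-q) ^ (-θ)) ^ (-θ⁻¹) ≠ 0 := by
    rw [hDval]; exact (mul_pos h1q hψx).ne'
  have hfin := hN.div hD hDne
  have heq : (((1-q) ^ (-θ)) ^ (-θ⁻¹) - ((lam + x) ^ (-θ) + (1-q) ^ (-θ)) ^ (-θ⁻¹)) /
      (((1-q) ^ (-θ)) ^ (-θ⁻¹) - (x ^ (-θ) + (1-q) ^ (-θ)) ^ (-θ⁻¹))
      = thetaPsi θ q (x + lam) / thetaPsi θ q x := by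
    rw [hNval, hDval, mul_div_mul_left _ _ h1q.ne']
  rw [← heq]
  exact hfin
end

section
/- For parameters (qq, gam, r) in [0,1) x (0,1) x (1,infinity) and t a nonnegative integer, define G(qq,gam,r; t, s) = r - (r - qq)^{1 - gam^t} * (r - s)^{gam^t} for s in [0, r) (the t-th iterate of the corresponding defective reproduction law). Let (q_n, gamma_n, r_n) -> (q, gamma, 1) with q in [0,1), gamma in (0,1), q_n in [0,1), gamma_n in (0,1), r_n > 1, and suppose t_n -> infinity with gamma_n^{t_n} * ln(1/(r_n - 1)) -> y for some y in (0, infinity). Then G(q_n,gamma_n,r_n; t_n, 1) - G(q_n,gamma_n,r_n; t_n, 0) converges to (1 - q)*(1 - e^{-y}). Probabilistically, P(T_n > t_n) -> (1-q)(1 - e^{-y}) for the associated defective branching processes. -/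
open Filter

/-- The `t`-th iterate of the defective theta-branching reproduction law with
`θ = 0` and parameters `(qq, gam, r) ∈ [0,1) × (0,1) × (1,∞)`:
`G qq gam r t s = r - (r-qq)^{1-gam^t} (r-s)^{gam^t}`. -/
noncomputable def thetaZeroIter (qq gam r : ℝ) (t : ℕ) (s : ℝ) : ℝ :=
  r - (r - qq) ^ (1 - gam ^ t) * (r - s) ^ (gam ^ t)

/-- Proposition 3(a): if `(q_n, γ_n, r_n) → (q, γ, 1)` and `t_n → ∞` with
`γ_n^{t_n} ln(1/(r_n - 1)) → y ∈ (0,∞)`, then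
`P(T_n > t_n) = G_n(t_n,1) - G_n(t_n,0) → (1-q)(1-e^{-y})`. -/
theorem stmt_16
    (q γ : ℝ) (hq : q ∈ Set.Ico (0 : ℝ) 1) (hγ : γ ∈ Set.Ioo (0 : ℝ) 1)
    (qn γn rn : ℕ → ℝ)
    (hqn : ∀ n, qn n ∈ Set.Ico (0 : ℝ) 1)
    (hγn : ∀ n, γn n ∈ Set.Ioo (0 : ℝ) 1)
    (hrn : ∀ n, 1 < rn n)
    (hqlim : Tendsto qn atTop (nhds q)) (hγlim : Tendsto γn atTop (nhds γ))
    (hrlim : Tendsto rn atTop (nhds 1))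
    (t : ℕ → ℕ) (ht : Tendsto t atTop atTop)
    (y : ℝ) (hy : 0 < y)
    (hylim :
      Tendsto (fun n => γn n ^ t n * Real.log (1 / (rn n - 1))) atTop (nhds y)) :
    Tendsto
      (fun n =>
        thetaZeroIter (qn n) (γn n) (rn n) (t n) 1 -
          thetaZeroIter (qn n) (γn n) (rn n) (t n) 0)
      atTop (nhds ((1 - q) * (1 - Real.exp (-y)))) := by
  set a : ℕ → ℝ := fun n => γn n ^ t n with ha
  have hr1 : ∀ n, 0 < rn n - 1 := fun n => by linarith [hrn n]
  have hLlim : Tendsto (fun n => Real.log (1 / (rn n - 1))) atTop atTop := by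
    have h0 : Tendsto (fun n => rn n - 1) atTop (nhds 0) := by
      simpa using hrlim.sub (tendsto_const_nhds (x := (1 : ℝ)))
    have h0' : Tendsto (fun n => rn n - 1) atTop (nhdsWithin 0 (Set.Ioi 0)) :=
      tendsto_nhdsWithin_of_tendsto_nhds_of_eventually_within _ h0
        (Eventually.of_forall fun n => hr1 n)
    have hinv : Tendsto (fun n => 1 / (rn n - 1)) atTop atTop := by
      simpa [one_div, Function.comp_def] using tendsto_inv_nhdsGT_zero.comp h0'
    exact Real.tendsto_log_atTop.comp hinv
  have halim : Tendsto a atTop (nhds 0) := by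
    have h := hylim.div_atTop hLlim
    apply h.congr'
    filter_upwards [hLlim.eventually_gt_atTop 0] with n hn
    exact mul_div_cancel_right₀ _ (ne_of_gt hn)
  have hfact1 : Tendsto (fun n => (rn n - qn n) ^ (1 - a n)) atTop (nhds (1 - q)) := by
    have hbase : Tendsto (fun n => rn n - qn n) atTop (nhds (1 - q)) := hrlim.sub hqlim
    have hexp : Tendsto (fun n => 1 - a n) atTop (nhds 1) := by
      simpa using (tendsto_const_nhds (x := (1 : ℝ))).sub halim
    have := hbase.rpow hexp (Or.inl (ne_of_gt (by linarith [hq.2])))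
    simpa using this
  have hfact2 : Tendsto (fun n => rn n ^ a n) atTop (nhds 1) := by
    have := hrlim.rpow halim (Or.inl one_ne_zero)
    simpa using this
  have hfact3 : Tendsto (fun n => (rn n - 1) ^ a n) atTop (nhds (Real.exp (-y))) := by
    have hlog : Tendsto (fun n => Real.log (rn n - 1) * a n) atTop (nhds (-y)) := by
      apply hylim.neg.congr
      intro n
      rw [one_div, Real.log_inv]
      ring
    have hexp := (Real.continuous_exp.tendsto (-y)).comp hlog
    apply hexp.congr
    intro n
    simp only [Function.comp]
    rw [Real.rpow_def_of_pos (hr1 n)]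
  have hmain :
      Tendsto
        (fun n => (rn n - qn n) ^ (1 - a n) * (rn n ^ a n - (rn n - 1) ^ a n))
        atTop (nhds ((1 - q) * (1 - Real.exp (-y)))) :=
    hfact1.mul (hfact2.sub hfact3)
  apply hmain.congr
  intro n
  simp only [thetaZeroIter, sub_zero, ← ha]
  ring
end

section
/- With the notation and hypotheses of the previous setup — G(qq,gam,r; t, s) = r - (r-qq)^{1-gam^t}(r-s)^{gam^t}; (q_n, gamma_n, r_n) -> (q, gamma, 1); t_n -> infinity with gamma_n^{t_n} * ln(1/(r_n-1)) -> y in (0,infinity) — let k >= 0 be a fixed integer, lambda > 0, and u in (0, y]. Write G_n(t,s) = G(q_n,gamma_n,r_n; t, s) and rhat_n = (r_n - 1)^{u * gamma_n^k / y}. Then the ratio (G_n(t_n - k, exp(-lambda*rhat_n)*G_n(k,1)) - G_n(t_n - k, exp(-lambda*rhat_n)*G_n(k,0))) / (G_n(t_n,1) - G_n(t_n,0)) converges, as n -> infinity, to (1 - e^{-u})/(1 - e^{-y}). Probabilistically, this yields P(gamma_n^{t_n-k} ln Z_n(t_n-k) <= u | T_n > t_n) -> (1-e^{-u})/(1-e^{-y})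 for 0 <= u <= y. -/
open Filter

/-- Proposition 3(b): under the hypotheses of Proposition 3(a), for a fixed `k ≥ 0`,
`λ > 0` and `u ∈ (0, y]`, with `r̂_n = (r_n - 1)^{u γ_n^k / y}`, the conditional
Laplace-transform ratio
`(G_n(t_n-k, e^{-λ r̂_n} G_n(k,1)) - G_n(t_n-k, e^{-λ r̂_n} G_n(k,0))) / (G_n(t_n,1) - G_n(t_n,0))`
converges to `(1-e^{-u})/(1-e^{-y})`. -/
theorem stmt_17
    (q γ : ℝ) (hq : q ∈ Set.Ico (0 : ℝ) 1) (hγ : γ ∈ Set.Ioo (0 : ℝ) 1)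
    (qn γn rn : ℕ → ℝ)
    (hqn : ∀ n, qn n ∈ Set.Ico (0 : ℝ) 1)
    (hγn : ∀ n, γn n ∈ Set.Ioo (0 : ℝ) 1)
    (hrn : ∀ n, 1 < rn n)
    (hqlim : Tendsto qn atTop (nhds q)) (hγlim : Tendsto γn atTop (nhds γ))
    (hrlim : Tendsto rn atTop (nhds 1))
    (t : ℕ → ℕ) (ht : Tendsto t atTop atTop)
    (y : ℝ) (hy : 0 < y)
    (hylim :
      Tendsto (fun n => γn n ^ t n * Real.log (1 / (rn n - 1))) atTop (nhds y))
    (k : ℕ) (lam : ℝ) (hlam : 0 < lam) (u : ℝ) (hu : u ∈ Set.Ioc (0 : ℝ) y) :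
    Tendsto
      (fun n =>
        (thetaZeroIter (qn n) (γn n) (rn n) (t n - k)
            (Real.exp (-(lam * (rn n - 1) ^ (u * γn n ^ k / y))) *
              thetaZeroIter (qn n) (γn n) (rn n) k 1) -
          thetaZeroIter (qn n) (γn n) (rn n) (t n - k)
            (Real.exp (-(lam * (rn n - 1) ^ (u * γn n ^ k / y))) *
              thetaZeroIter (qn n) (γn n) (rn n) k 0)) /
        (thetaZeroIter (qn n) (γn n) (rn n) (t n) 1 -
          thetaZeroIter (qn n) (γn n) (rn n) (t n) 0))
      atTop (nhds ((1 - Real.exp (-u)) / (1 - Real.exp (-y)))) := by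
  obtain ⟨hq0, hq1⟩ := hq
  obtain ⟨hγ0, hγ1⟩ := hγ
  obtain ⟨hu0, huy⟩ := hu
  have h1q : (0:ℝ) < 1 - q := by linarith
  have hγk : (0:ℝ) < γ ^ k := pow_pos hγ0 k
  have hεpos : ∀ n, 0 < rn n - 1 := fun n => by linarith [hrn n]
  have hrqpos : ∀ n, 0 < rn n - qn n := fun n => by linarith [hrn n, (hqn n).2]
  have hγnpos : ∀ n, (0:ℝ) < γn n := fun n => (hγn n).1
  have hεlim : Tendsto (fun n => rn n - 1) atTop (nhds (0:ℝ)) := by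
    have := hrlim.sub (tendsto_const_nhds (α := ℕ) (x := (1:ℝ)))
    simpa using this
  have hLdef : ∀ n, Real.log (1 / (rn n - 1)) = - Real.log (rn n - 1) := fun n => by
    rw [one_div, Real.log_inv]
  have hLtop : Tendsto (fun n => Real.log (1 / (rn n - 1))) atTop atTop := by
    have h1 : Tendsto (fun n => Real.log (rn n - 1)) atTop atBot :=
      Real.tendsto_log_nhdsGT_zero.comp
        (tendsto_nhdsWithin_of_tendsto_nhds_of_eventually_within _ hεlim
          (Eventually.of_forall fun n => hεpos n))
    exact (tendsto_neg_atBot_atTop.comp h1).congr fun n => (hLdef n).symm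
  -- b := γn ^ t n tends to 0
  have hb : Tendsto (fun n => γn n ^ t n) atTop (nhds (0:ℝ)) := by
    have h2 := hylim.div_atTop hLtop
    refine h2.congr' ?_
    filter_upwards [hLtop.eventually_ge_atTop 1] with n hn
    have hne : Real.log (1 / (rn n - 1)) ≠ 0 := by linarith
    exact mul_div_cancel_right₀ _ hne
  have hκ : Tendsto (fun n => γn n ^ k) atTop (nhds (γ ^ k)) := hγlim.pow k
  have hκpos : ∀ n, (0:ℝ) < γn n ^ k := fun n => pow_pos (hγnpos n) k
  have htk : ∀ᶠ n in atTop, k ≤ t n := ht.eventually_ge_atTop k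
  have haeq : ∀ᶠ n in atTop, γn n ^ (t n - k) = γn n ^ t n / γn n ^ k := by
    filter_upwards [htk] with n hn
    rw [eq_div_iff (hκpos n).ne', pow_sub_mul_pow _ hn]
  have ha : Tendsto (fun n => γn n ^ (t n - k)) atTop (nhds (0:ℝ)) := by
    have h3 := hb.div hκ hγk.ne'
    rw [zero_div] at h3
    refine h3.congr' ?_
    filter_upwards [haeq] with n hn
    simp only [Pi.div_apply]
    exact hn.symm
  have haL : Tendsto (fun n => γn n ^ (t n - k) * Real.log (1 / (rn n - 1))) atTop
      (nhds (y / γ ^ k)) := by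
    have h3 := hylim.div hκ hγk.ne'
    refine h3.congr' ?_
    filter_upwards [haeq] with n hn
    simp only [Pi.div_apply]
    rw [hn]
    ring
  have hrq : Tendsto (fun n => rn n - qn n) atTop (nhds (1 - q)) := hrlim.sub hqlim
  have T1 : Tendsto (fun n => (rn n - qn n) ^ (1 - γn n ^ t n)) atTop (nhds (1 - q)) := by
    have := hrq.rpow ((tendsto_const_nhds (α := ℕ) (x := (1:ℝ))).sub hb) (Or.inl h1q.ne')
    simpa using this
  have T1a : Tendsto (fun n => (rn n - qn n) ^ (1 - γn n ^ (t n - k))) atTop (nhds (1 - q)) := by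
    have := hrq.rpow ((tendsto_const_nhds (α := ℕ) (x := (1:ℝ))).sub ha) (Or.inl h1q.ne')
    simpa using this
  have hr0 : Tendsto (fun n => rn n - 0) atTop (nhds (1:ℝ)) := by simpa using hrlim
  have T2 : Tendsto (fun n => (rn n - 0) ^ (γn n ^ t n)) atTop (nhds (1:ℝ)) := by
    have := hr0.rpow hb (Or.inl one_ne_zero)
    simpa using this
  have T3 : Tendsto (fun n => (rn n - 1) ^ (γn n ^ t n)) atTop (nhds (Real.exp (-y))) := by
    have h1 : Tendsto (fun n => Real.exp (-(γn n ^ t n * Real.log (1 / (rn n - 1))))) atTop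
        (nhds (Real.exp (-y))) := (Real.continuous_exp.tendsto _).comp hylim.neg
    refine h1.congr fun n => ?_
    rw [Real.rpow_def_of_pos (hεpos n), hLdef n]
    congr 1
    ring
  have hD : Tendsto (fun n => thetaZeroIter (qn n) (γn n) (rn n) (t n) 1 -
      thetaZeroIter (qn n) (γn n) (rn n) (t n) 0) atTop
      (nhds ((1 - q) * 1 - (1 - q) * Real.exp (-y))) := by
    refine ((T1.mul T2).sub (T1.mul T3)).congr fun n => ?_
    simp only [thetaZeroIter]
    ring
  -- numerator pieces
  have hβ : Tendsto (fun n => u * γn n ^ k / y) atTop (nhds (u * γ ^ k / y)) :=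
    ((tendsto_const_nhds (α := ℕ) (x := u)).mul hκ).div_const y
  have hβpos : 0 < u * γ ^ k / y := by positivity
  have hεβ : Tendsto (fun n => (rn n - 1) ^ (u * γn n ^ k / y)) atTop (nhds (0:ℝ)) := by
    have := hεlim.rpow hβ (Or.inr hβpos)
    rwa [Real.zero_rpow hβpos.ne'] at this
  have hc : Tendsto (fun n => lam * (rn n - 1) ^ (u * γn n ^ k / y)) atTop (nhds (0:ℝ)) := by
    have := hεβ.const_mul lam
    simpa using this
  have hcpos : ∀ n, 0 < lam * (rn n - 1) ^ (u * γn n ^ k / y) := fun n =>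
    mul_pos hlam (Real.rpow_pos_of_pos (hεpos n) _)
  have hexpc : Tendsto (fun n => Real.exp (-(lam * (rn n - 1) ^ (u * γn n ^ k / y)))) atTop
      (nhds (1:ℝ)) := by
    have := (Real.continuous_exp.tendsto _).comp hc.neg
    simpa [Function.comp_def] using this
  have hXκ : Tendsto (fun n => (rn n - qn n) ^ (1 - γn n ^ k)) atTop
      (nhds ((1 - q) ^ (1 - γ ^ k))) :=
    hrq.rpow ((tendsto_const_nhds (α := ℕ) (x := (1:ℝ))).sub hκ) (Or.inl h1q.ne')
  have hmpos : 0 < (1 - q) ^ (1 - γ ^ k) := Real.rpow_pos_of_pos h1q _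
  have hεκ : Tendsto (fun n => (rn n - 1) ^ (γn n ^ k)) atTop (nhds (0:ℝ)) := by
    have := hεlim.rpow hκ (Or.inr hγk)
    rwa [Real.zero_rpow hγk.ne'] at this
  have hG1 : Tendsto (fun n => thetaZeroIter (qn n) (γn n) (rn n) k 1) atTop (nhds (1:ℝ)) := by
    have h3 := hrlim.sub (hXκ.mul hεκ)
    rw [mul_zero, sub_zero] at h3
    exact h3.congr fun n => by simp only [thetaZeroIter]
  have hr0κ : Tendsto (fun n => (rn n - 0) ^ (γn n ^ k)) atTop (nhds (1:ℝ)) := by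
    have := hr0.rpow hκ (Or.inl one_ne_zero)
    simpa using this
  have hG0 : Tendsto (fun n => thetaZeroIter (qn n) (γn n) (rn n) k 0) atTop
      (nhds (1 - (1 - q) ^ (1 - γ ^ k))) := by
    have h3 := hrlim.sub (hXκ.mul hr0κ)
    rw [mul_one] at h3
    exact h3.congr fun n => by simp only [thetaZeroIter]
  have hs0 : Tendsto (fun n => rn n - Real.exp (-(lam * (rn n - 1) ^ (u * γn n ^ k / y))) *
      thetaZeroIter (qn n) (γn n) (rn n) k 0) atTop (nhds ((1 - q) ^ (1 - γ ^ k))) := by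
    have h3 := hrlim.sub (hexpc.mul hG0)
    have heq : (1:ℝ) - 1 * (1 - (1 - q) ^ (1 - γ ^ k)) = (1 - q) ^ (1 - γ ^ k) := by ring
    rwa [heq] at h3
  have hA0 : Tendsto (fun n => (rn n - Real.exp (-(lam * (rn n - 1) ^ (u * γn n ^ k / y))) *
      thetaZeroIter (qn n) (γn n) (rn n) k 0) ^ (γn n ^ (t n - k))) atTop (nhds (1:ℝ)) := by
    have := hs0.rpow ha (Or.inl hmpos.ne')
    simpa using this
  -- (1 - exp(-c))/c → 1
  have hslope : Tendsto (fun h : ℝ => (Real.exp h - 1) / h) (nhdsWithin 0 {(0:ℝ)}ᶜ)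
      (nhds (1:ℝ)) := by
    have h := Real.hasDerivAt_exp 0
    rw [hasDerivAt_iff_tendsto_slope] at h
    simp only [Real.exp_zero] at h
    refine h.congr fun x => ?_
    rw [slope_def_field]
    rw [Real.exp_zero]
    ring
  have hnegc : Tendsto (fun n => -(lam * (rn n - 1) ^ (u * γn n ^ k / y))) atTop
      (nhdsWithin 0 {(0:ℝ)}ᶜ) :=
    tendsto_nhdsWithin_of_tendsto_nhds_of_eventually_within _ (by simpa using hc.neg)
      (Eventually.of_forall fun n => by
        simp only [Set.mem_compl_iff, Set.mem_singleton_iff]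
        exact (neg_lt_zero.mpr (hcpos n)).ne)
  have h1c : Tendsto (fun n => (1 - Real.exp (-(lam * (rn n - 1) ^ (u * γn n ^ k / y)))) /
      (lam * (rn n - 1) ^ (u * γn n ^ k / y))) atTop (nhds (1:ℝ)) := by
    have h3 := hslope.comp hnegc
    refine h3.congr fun n => ?_
    have hcn : lam * (rn n - 1) ^ (u * γn n ^ k / y) ≠ 0 := (hcpos n).ne'
    show (Real.exp (-(lam * (rn n - 1) ^ (u * γn n ^ k / y))) - 1) /
        (-(lam * (rn n - 1) ^ (u * γn n ^ k / y))) = _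
    rw [div_neg, ← neg_div, neg_sub]
  -- key identity for W
  have hkey : ∀ n, (rn n - Real.exp (-(lam * (rn n - 1) ^ (u * γn n ^ k / y))) *
        thetaZeroIter (qn n) (γn n) (rn n) k 1) / (rn n - 1) ^ (u * γn n ^ k / y) =
      (rn n - qn n) ^ (1 - γn n ^ k) * (rn n - 1) ^ (γn n ^ k - u * γn n ^ k / y) +
        lam * ((1 - Real.exp (-(lam * (rn n - 1) ^ (u * γn n ^ k / y)))) /
          (lam * (rn n - 1) ^ (u * γn n ^ k / y))) *
          thetaZeroIter (qn n) (γn n) (rn n) k 1 := by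
    intro n
    have hεβpos : 0 < (rn n - 1) ^ (u * γn n ^ k / y) := Real.rpow_pos_of_pos (hεpos n) _
    have hBne : (rn n - 1) ^ (u * γn n ^ k / y) ≠ 0 := hεβpos.ne'
    have hlne : lam ≠ 0 := hlam.ne'
    rw [Real.rpow_sub (hεpos n)]
    simp only [thetaZeroIter]
    field_simp
    ring
  -- Term1 limit (case split on u = y or u < y)
  have hTerm1 : ∃ d : ℝ, 0 ≤ d ∧ Tendsto (fun n => (rn n - qn n) ^ (1 - γn n ^ k) *
      (rn n - 1) ^ (γn n ^ k - u * γn n ^ k / y)) atTop (nhds d) := by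
    rcases eq_or_lt_of_le huy with huy' | huy'
    · refine ⟨(1 - q) ^ (1 - γ ^ k), hmpos.le, ?_⟩
      refine hXκ.congr fun n => ?_
      have hz : γn n ^ k - u * γn n ^ k / y = 0 := by
        rw [huy']
        field_simp
        ring
      rw [hz, Real.rpow_zero, mul_one]
    · refine ⟨0, le_refl 0, ?_⟩
      have hexp : Tendsto (fun n => γn n ^ k - u * γn n ^ k / y) atTop
          (nhds (γ ^ k - u * γ ^ k / y)) := hκ.sub hβ
      have hposd : 0 < γ ^ k - u * γ ^ k / y := by
        have h4 : u * γ ^ k / y < γ ^ k := by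
          rw [div_lt_iff₀ hy]
          nlinarith
        linarith
      have h5 := hεlim.rpow hexp (Or.inr hposd)
      rw [Real.zero_rpow hposd.ne'] at h5
      have h6 := hXκ.mul h5
      rwa [mul_zero] at h6
  obtain ⟨d, hd, hT1⟩ := hTerm1
  have hwpos : 0 < d + lam := by linarith
  -- W limit
  have hW : Tendsto (fun n => (rn n - Real.exp (-(lam * (rn n - 1) ^ (u * γn n ^ k / y))) *
      thetaZeroIter (qn n) (γn n) (rn n) k 1) / (rn n - 1) ^ (u * γn n ^ k / y)) atTop
      (nhds (d + lam)) := by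
    have h2 : Tendsto (fun n => lam * ((1 - Real.exp (-(lam * (rn n - 1) ^ (u * γn n ^ k / y)))) /
        (lam * (rn n - 1) ^ (u * γn n ^ k / y))) * thetaZeroIter (qn n) (γn n) (rn n) k 1) atTop
        (nhds lam) := by
      have := ((tendsto_const_nhds (α := ℕ) (x := lam)).mul h1c).mul hG1
      simpa using this
    exact (hT1.add h2).congr fun n => (hkey n).symm
  have hWpos : ∀ᶠ n in atTop, 0 < (rn n - Real.exp (-(lam * (rn n - 1) ^ (u * γn n ^ k / y))) *
      thetaZeroIter (qn n) (γn n) (rn n) k 1) / (rn n - 1) ^ (u * γn n ^ k / y) :=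
    hW.eventually (eventually_gt_nhds hwpos)
  have hlogW : Tendsto (fun n => Real.log ((rn n - Real.exp (-(lam * (rn n - 1) ^
      (u * γn n ^ k / y))) * thetaZeroIter (qn n) (γn n) (rn n) k 1) /
      (rn n - 1) ^ (u * γn n ^ k / y))) atTop (nhds (Real.log (d + lam))) :=
    ((Real.continuousAt_log hwpos.ne').tendsto).comp hW
  have halogF : Tendsto (fun n => γn n ^ (t n - k) * Real.log (rn n -
      Real.exp (-(lam * (rn n - 1) ^ (u * γn n ^ k / y))) *
      thetaZeroIter (qn n) (γn n) (rn n) k 1)) atTop (nhds (-u)) := by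
    have hsum := (((hβ.mul haL).neg).add (ha.mul hlogW))
    have hval : -(u * γ ^ k / y * (y / γ ^ k)) + 0 * Real.log (d + lam) = -u := by
      field_simp
      ring
    rw [hval] at hsum
    refine hsum.congr' ?_
    filter_upwards [hWpos] with n hn
    have hεβpos : 0 < (rn n - 1) ^ (u * γn n ^ k / y) := Real.rpow_pos_of_pos (hεpos n) _
    have hF : rn n - Real.exp (-(lam * (rn n - 1) ^ (u * γn n ^ k / y))) *
        thetaZeroIter (qn n) (γn n) (rn n) k 1 =
        ((rn n - Real.exp (-(lam * (rn n - 1) ^ (u * γn n ^ k / y))) *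
          thetaZeroIter (qn n) (γn n) (rn n) k 1) / (rn n - 1) ^ (u * γn n ^ k / y)) *
        (rn n - 1) ^ (u * γn n ^ k / y) :=
      (div_mul_cancel₀ _ hεβpos.ne').symm
    conv_rhs => rw [hF]
    rw [Real.log_mul hn.ne' hεβpos.ne', Real.log_rpow (hεpos n), hLdef n]
    ring
  have hA1 : Tendsto (fun n => (rn n - Real.exp (-(lam * (rn n - 1) ^ (u * γn n ^ k / y))) *
      thetaZeroIter (qn n) (γn n) (rn n) k 1) ^ (γn n ^ (t n - k))) atTop
      (nhds (Real.exp (-u))) := by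
    have h3 := (Real.continuous_exp.tendsto _).comp halogF
    refine h3.congr' ?_
    filter_upwards [hWpos] with n hn
    have hεβpos : 0 < (rn n - 1) ^ (u * γn n ^ k / y) := Real.rpow_pos_of_pos (hεpos n) _
    have hFpos : 0 < rn n - Real.exp (-(lam * (rn n - 1) ^ (u * γn n ^ k / y))) *
        thetaZeroIter (qn n) (γn n) (rn n) k 1 := by
      have hF : rn n - Real.exp (-(lam * (rn n - 1) ^ (u * γn n ^ k / y))) *
          thetaZeroIter (qn n) (γn n) (rn n) k 1 =
          ((rn n - Real.exp (-(lam * (rn n - 1) ^ (u * γn n ^ k / y))) *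
            thetaZeroIter (qn n) (γn n) (rn n) k 1) / (rn n - 1) ^ (u * γn n ^ k / y)) *
          (rn n - 1) ^ (u * γn n ^ k / y) :=
        (div_mul_cancel₀ _ hεβpos.ne').symm
      rw [hF]
      exact mul_pos hn hεβpos
    simp only [Function.comp_apply]
    rw [Real.rpow_def_of_pos hFpos]
    congr 1
    ring
  -- assemble numerator
  have hN : Tendsto (fun n => thetaZeroIter (qn n) (γn n) (rn n) (t n - k)
      (Real.exp (-(lam * (rn n - 1) ^ (u * γn n ^ k / y))) *
        thetaZeroIter (qn n) (γn n) (rn n) k 1) -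
      thetaZeroIter (qn n) (γn n) (rn n) (t n - k)
      (Real.exp (-(lam * (rn n - 1) ^ (u * γn n ^ k / y))) *
        thetaZeroIter (qn n) (γn n) (rn n) k 0)) atTop
      (nhds ((1 - q) * 1 - (1 - q) * Real.exp (-u))) := by
    refine ((T1a.mul hA0).sub (T1a.mul hA1)).congr fun n => ?_
    simp only [thetaZeroIter]
    ring
  have hey : Real.exp (-y) < 1 := by
    have := Real.exp_lt_exp.mpr (show -y < 0 by linarith)
    simpa using this
  have hDne : (1 - q) * 1 - (1 - q) * Real.exp (-y) ≠ 0 := by nlinarith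
  have hfinal := hN.div hD hDne
  have hvaleq : ((1 - q) * 1 - (1 - q) * Real.exp (-u)) /
      ((1 - q) * 1 - (1 - q) * Real.exp (-y)) =
      (1 - Real.exp (-u)) / (1 - Real.exp (-y)) := by
    rw [show (1 - q) * 1 - (1 - q) * Real.exp (-u) = (1 - q) * (1 - Real.exp (-u)) by ring,
      show (1 - q) * 1 - (1 - q) * Real.exp (-y) = (1 - q) * (1 - Real.exp (-y)) by ring,
      mul_div_mul_left _ _ h1q.ne']
  rwa [hvaleq] at hfinal
end

section
/- For parameters (th, qq, gam, A) in (-1,0) x [0,1) x (0,1) x [1,infinity) and t a nonnegative integer, define K(th,qq,gam,A; t, s) = A - [gam^t * (A - s)^{|th|} + (1 - gam^t)*(A - qq)^{|th|}]^{1/|th|} for s in [0, A] (the t-th iterate of the corresponding defective reproduction law). Let (theta_n, gamma_n, q_n, A_n) -> (0, gamma, q, 1) with gamma in (0,1), q in [0,1), theta_n in (-1,0), gamma_n in (0,1), q_n in [0,1), A_n >= 1, and suppose |theta_n| * ln(1/(A_n - 1)) -> a for some a in (0, infinity) and t_n -> infinity with gamma_n^{t_n}/|theta_n| -> y for some y in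 (0,infinity). Then K(theta_n,q_n,gamma_n,A_n; t_n, 1) - K(theta_n,q_n,gamma_n,A_n; t_n, 0) converges to (1-q)*(1 - exp(-y*(1 - e^{-a}))). Probabilistically, P(T_n > t_n) -> (1-q)(1 - e^{-y(1-e^{-a})}) for the associated defective branching processes. -/
open Filter

/-- The `t`-th iterate of the defective theta-branching reproduction law with
negative theta and parameters `(th, qq, gam, A) ∈ (-1,0) × [0,1) × (0,1) × [1,∞)`:
`K th qq gam A t s = A - [gam^t (A-s)^{|th|} + (1-gam^t)(A-qq)^{|th|}]^{1/|th|}`. -/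
noncomputable def thetaNegIter (th qq gam A : ℝ) (t : ℕ) (s : ℝ) : ℝ :=
  A - (gam ^ t * (A - s) ^ |th| + (1 - gam ^ t) * (A - qq) ^ |th|) ^ |th|⁻¹

/-- Key auxiliary limit: if `Q n = c n ^ b n` with `c n > 0`, `c → lc`, `b → 0`, `b > 0`,
`0 < g ≤ 1`, `P > 0`, and `(g/b)(P/Q - 1) → L`, then
`(g P + (1-g) Q)^{1/b} → lc · exp L`. -/
lemma thetaNeg_aux (b g P Q c : ℕ → ℝ) (L lc : ℝ)
    (hb : ∀ᶠ n in atTop, 0 < b n)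
    (hg : ∀ᶠ n in atTop, 0 < g n ∧ g n ≤ 1)
    (hP : ∀ᶠ n in atTop, 0 < P n)
    (hQ : ∀ᶠ n in atTop, 0 < c n ∧ Q n = c n ^ b n)
    (hc : Tendsto c atTop (nhds lc))
    (hb0 : Tendsto b atTop (nhds (0 : ℝ)))
    (hv : Tendsto (fun n => g n / b n * (P n / Q n - 1)) atTop (nhds L)) :
    Tendsto (fun n => (g n * P n + (1 - g n) * Q n) ^ (b n)⁻¹) atTop
      (nhds (lc * Real.exp L)) := by
  set v : ℕ → ℝ := fun n => g n / b n * (P n / Q n - 1) with hvdef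
  set u : ℕ → ℝ := fun n => g n * (P n / Q n - 1) with hudef
  have hu_eq : ∀ᶠ n in atTop, u n = b n * v n := by
    filter_upwards [hb] with n hbn
    have : b n ≠ 0 := ne_of_gt hbn
    simp only [hudef, hvdef]
    field_simp
  have hu0 : Tendsto u atTop (nhds 0) := by
    have : Tendsto (fun n => b n * v n) atTop (nhds (0 * L)) := hb0.mul hv
    rw [zero_mul] at this
    exact Tendsto.congr' (hu_eq.mono fun n h => h.symm) this
  have hQpos : ∀ᶠ n in atTop, 0 < Q n := by
    filter_upwards [hQ] with n ⟨hcn, hQn⟩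
    rw [hQn]; exact Real.rpow_pos_of_pos hcn _
  have h1u : ∀ᶠ n in atTop, 0 < 1 + u n := by
    filter_upwards [hg, hP, hQpos] with n ⟨hg0, hg1⟩ hPn hQn
    have hPQ : 0 < P n / Q n := div_pos hPn hQn
    have : 1 + u n = (1 - g n) + g n * (P n / Q n) := by simp [hudef]; ring
    rw [this]
    have : 0 < g n * (P n / Q n) := mul_pos hg0 hPQ
    nlinarith
  have key : Tendsto (fun n => (b n)⁻¹ * Real.log (1 + u n)) atTop (nhds L) := by
    have hlow : Tendsto (fun n => v n / (1 + u n)) atTop (nhds L) := by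
      have h1 : Tendsto (fun n => 1 + u n) atTop (nhds 1) := by
        have := (tendsto_const_nhds (x := (1 : ℝ)) (f := atTop)).add hu0
        simpa using this
      simpa [Pi.div_def] using hv.div h1 one_ne_zero
    apply tendsto_of_tendsto_of_tendsto_of_le_of_le' hlow hv
    · -- v/(1+u) ≤ b⁻¹ log(1+u)
      filter_upwards [hb, h1u, hu_eq] with n hbn h1un huv
      have hlog : u n / (1 + u n) ≤ Real.log (1 + u n) := by
        have := Real.one_sub_inv_le_log_of_pos h1un
        have h2 : 1 - (1 + u n)⁻¹ = u n / (1 + u n) := by field_simp; ring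
        linarith [h2 ▸ this]
      have hbinv : (0 : ℝ) ≤ (b n)⁻¹ := le_of_lt (inv_pos.mpr hbn)
      have := mul_le_mul_of_nonneg_left hlog hbinv
      calc v n / (1 + u n) = (b n)⁻¹ * (u n / (1 + u n)) := by
            rw [huv]; field_simp
        _ ≤ (b n)⁻¹ * Real.log (1 + u n) := this
    · -- b⁻¹ log(1+u) ≤ v
      filter_upwards [hb, h1u, hu_eq] with n hbn h1un huv
      have hlog : Real.log (1 + u n) ≤ u n := by
        have := Real.log_le_sub_one_of_pos h1un
        linarith
      have hbinv : (0 : ℝ) ≤ (b n)⁻¹ := le_of_lt (inv_pos.mpr hbn)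
      calc (b n)⁻¹ * Real.log (1 + u n) ≤ (b n)⁻¹ * u n :=
            mul_le_mul_of_nonneg_left hlog hbinv
        _ = v n := by rw [huv]; field_simp
  have heq : ∀ᶠ n in atTop,
      (g n * P n + (1 - g n) * Q n) ^ (b n)⁻¹
        = c n * Real.exp ((b n)⁻¹ * Real.log (1 + u n)) := by
    filter_upwards [hb, hQ, hQpos, h1u] with n hbn ⟨hcn, hQn⟩ hQpn h1un
    have hsum : g n * P n + (1 - g n) * Q n = Q n * (1 + u n) := by
      have hQne : Q n ≠ 0 := ne_of_gt hQpn
      have hPQ : Q n * (P n / Q n) = P n := by field_simp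
      show _ = Q n * (1 + g n * (P n / Q n - 1))
      linear_combination (-g n) * hPQ
    rw [hsum, Real.mul_rpow (le_of_lt hQpn) (le_of_lt h1un),
      Real.rpow_def_of_pos h1un, hQn]
    rw [← Real.rpow_mul (le_of_lt hcn) (b n) (b n)⁻¹, mul_inv_cancel₀ (ne_of_gt hbn),
      Real.rpow_one, mul_comm ((b n)⁻¹) _]
  have : Tendsto (fun n => c n * Real.exp ((b n)⁻¹ * Real.log (1 + u n))) atTop
      (nhds (lc * Real.exp L)) := hc.mul ((Real.continuous_exp.tendsto L).comp key)
  exact Tendsto.congr' (heq.mono fun n h => h.symm) this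

/-- Proposition 4(a): if `(θ_n, γ_n, q_n, A_n) → (0, γ, q, 1)` with
`|θ_n| ln(1/(A_n-1)) → a ∈ (0,∞)` and `γ_n^{t_n}/|θ_n| → y ∈ (0,∞)` for some
`t_n → ∞`, then `P(T_n > t_n) = K_n(t_n,1) - K_n(t_n,0) → (1-q)(1-e^{-y(1-e^{-a})})`. -/
theorem stmt_18
    (q γ : ℝ) (hq : q ∈ Set.Ico (0 : ℝ) 1) (hγ : γ ∈ Set.Ioo (0 : ℝ) 1)
    (θn γn qn An : ℕ → ℝ)
    (hθn : ∀ n, θn n ∈ Set.Ioo (-1 : ℝ) 0)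
    (hγn : ∀ n, γn n ∈ Set.Ioo (0 : ℝ) 1)
    (hqn : ∀ n, qn n ∈ Set.Ico (0 : ℝ) 1)
    (hAn : ∀ n, 1 ≤ An n)
    (hθlim : Tendsto θn atTop (nhds 0)) (hγlim : Tendsto γn atTop (nhds γ))
    (hqlim : Tendsto qn atTop (nhds q)) (hAlim : Tendsto An atTop (nhds 1))
    (a : ℝ) (ha : 0 < a)
    (halim :
      Tendsto (fun n => |θn n| * Real.log (1 / (An n - 1))) atTop (nhds a))
    (t : ℕ → ℕ) (ht : Tendsto t atTop atTop)
    (y : ℝ) (hy : 0 < y)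
    (hylim : Tendsto (fun n => γn n ^ t n / |θn n|) atTop (nhds y)) :
    Tendsto
      (fun n =>
        thetaNegIter (θn n) (qn n) (γn n) (An n) (t n) 1 -
          thetaNegIter (θn n) (qn n) (γn n) (An n) (t n) 0)
      atTop
      (nhds ((1 - q) * (1 - Real.exp (-(y * (1 - Real.exp (-a))))))) := by
  -- notation
  set b : ℕ → ℝ := fun n => |θn n| with hbdef
  set g : ℕ → ℝ := fun n => γn n ^ t n with hgdef
  have hbpos : ∀ n, 0 < b n := fun n => abs_pos.mpr (ne_of_lt (hθn n).2)
  have hb0 : Tendsto b atTop (nhds 0) := by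
    have := hθlim.abs; simpa using this
  have hgpos : ∀ᶠ n in atTop, 0 < g n ∧ g n ≤ 1 :=
    Eventually.of_forall fun n =>
      ⟨pow_pos (hγn n).1 _, pow_le_one₀ (le_of_lt (hγn n).1) (le_of_lt (hγn n).2)⟩
  have hbE : ∀ᶠ n in atTop, 0 < b n := Eventually.of_forall hbpos
  -- eventually A_n > 1
  have hA1 : ∀ᶠ n in atTop, 1 < An n := by
    filter_upwards [halim.eventually (eventually_gt_nhds (half_lt_self ha))] with n hn
    by_contra h
    have hA : An n = 1 := le_antisymm (not_lt.mp h) (hAn n)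
    have hz : |θn n| * Real.log (1 / (An n - 1)) = 0 := by rw [hA]; simp
    rw [hz] at hn
    linarith [half_pos ha]
  -- eventually A_n - q_n > 0, and its limit
  have hcq : Tendsto (fun n => An n - qn n) atTop (nhds (1 - q)) := hAlim.sub hqlim
  have hq1 : q < 1 := hq.2
  have hcqpos : ∀ᶠ n in atTop, 0 < An n - qn n :=
    hcq.eventually (eventually_gt_nhds (by linarith))
  -- (A_n - 1)^b → e^{-a}
  have hblog1 : Tendsto (fun n => b n * Real.log (An n - 1)) atTop (nhds (-a)) := by
    have : (fun n => b n * Real.log (An n - 1))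
        = fun n => -(|θn n| * Real.log (1 / (An n - 1))) := by
      funext n
      rw [one_div, Real.log_inv]
      ring
    rw [this]
    simpa using halim.neg
  have hP1 : Tendsto (fun n => (An n - 1) ^ b n) atTop (nhds (Real.exp (-a))) := by
    have hexp : Tendsto (fun n => Real.exp (b n * Real.log (An n - 1))) atTop
        (nhds (Real.exp (-a))) := (Real.continuous_exp.tendsto _).comp hblog1
    apply Tendsto.congr' _ hexp
    filter_upwards [hA1] with n hn
    rw [Real.rpow_def_of_pos (by linarith), mul_comm]
  -- (A_n - q_n)^b → 1
  have hQ1 : Tendsto (fun n => (An n - qn n) ^ b n) atTop (nhds 1) := by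
    have hlog : Tendsto (fun n => Real.log (An n - qn n)) atTop
        (nhds (Real.log (1 - q))) := hcq.log (by linarith)
    have : Tendsto (fun n => b n * Real.log (An n - qn n)) atTop (nhds 0) := by
      have := hb0.mul hlog; simpa using this
    have hexp : Tendsto (fun n => Real.exp (b n * Real.log (An n - qn n))) atTop
        (nhds 1) := by
      have := (Real.continuous_exp.tendsto _).comp this
      simpa [Function.comp_def] using this
    apply Tendsto.congr' _ hexp
    filter_upwards [hcqpos] with n hn
    rw [Real.rpow_def_of_pos hn, mul_comm]
  -- A_n^b → 1
  have hP0 : Tendsto (fun n => (An n) ^ b n) atTop (nhds 1) := by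
    have hlog : Tendsto (fun n => Real.log (An n)) atTop (nhds 0) := by
      have := hAlim.log one_ne_zero; simpa using this
    have : Tendsto (fun n => b n * Real.log (An n)) atTop (nhds 0) := by
      have := hb0.mul hlog; simpa using this
    have hexp : Tendsto (fun n => Real.exp (b n * Real.log (An n))) atTop
        (nhds 1) := by
      have := (Real.continuous_exp.tendsto _).comp this
      simpa [Function.comp_def] using this
    apply Tendsto.congr' _ hexp
    filter_upwards with n
    rw [Real.rpow_def_of_pos (by linarith [hAn n]), mul_comm]
  have hQhyp : ∀ᶠ n in atTop, 0 < An n - qn n ∧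
      (An n - qn n) ^ b n = (An n - qn n) ^ b n :=
    hcqpos.mono fun n h => ⟨h, rfl⟩
  have hv1 : Tendsto (fun n => g n / b n *
      ((An n - 1) ^ b n / (An n - qn n) ^ b n - 1)) atTop
      (nhds (y * (Real.exp (-a) - 1))) := by
    have hdiv : Tendsto (fun n => (An n - 1) ^ b n / (An n - qn n) ^ b n) atTop
        (nhds (Real.exp (-a))) := by simpa [Pi.div_def] using hP1.div hQ1 one_ne_zero
    exact hylim.mul (hdiv.sub tendsto_const_nhds)
  have hv0 : Tendsto (fun n => g n / b n *
      ((An n) ^ b n / (An n - qn n) ^ b n - 1)) atTop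
      (nhds (y * (1 - 1))) := by
    have hdiv : Tendsto (fun n => (An n) ^ b n / (An n - qn n) ^ b n) atTop
        (nhds 1) := by simpa [Pi.div_def] using hP0.div hQ1 one_ne_zero
    exact hylim.mul (hdiv.sub tendsto_const_nhds)
  -- the two applications of the auxiliary lemma
  have hK1 := thetaNeg_aux b g (fun n => (An n - 1) ^ b n)
      (fun n => (An n - qn n) ^ b n) (fun n => An n - qn n)
      (y * (Real.exp (-a) - 1)) (1 - q) hbE hgpos
      (by filter_upwards [hA1] with n hn; exact Real.rpow_pos_of_pos (by linarith) _)
      hQhyp hcq hb0 hv1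
  have hK0 := thetaNeg_aux b g (fun n => (An n) ^ b n)
      (fun n => (An n - qn n) ^ b n) (fun n => An n - qn n)
      (y * (1 - 1)) (1 - q) hbE hgpos
      (Eventually.of_forall fun n => Real.rpow_pos_of_pos (by linarith [hAn n]) _)
      hQhyp hcq hb0 hv0
  have hsub := hK0.sub hK1
  have hval : (1 - q) * Real.exp (y * (1 - 1)) -
      (1 - q) * Real.exp (y * (Real.exp (-a) - 1))
      = (1 - q) * (1 - Real.exp (-(y * (1 - Real.exp (-a))))) := by
    rw [show y * ((1 : ℝ) - 1) = 0 by ring, Real.exp_zero,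
      show y * (Real.exp (-a) - 1) = -(y * (1 - Real.exp (-a))) by ring]
    ring
  rw [hval] at hsub
  apply Tendsto.congr _ hsub
  intro n
  simp only [thetaNegIter, sub_zero]
  ring
end
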